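/- arXiv:1910.12355 — 2 statements merged into one kernel-verified Lean document; each statement's English description precedes it below -/
import Mathlib

section
/- Let G be a finite distance-regular graph with intersection numbers {(a_k, b_k)} and diameter n, and let P_0, …, P_n be the polynomials of the first kind built from a_1,…,a_n, b_1,…,b_n and α_k = b_1 − (a_k + b_{k+1}) (with b_{n+1} = 0). Then for every 0 ≤ k ≤ n, evaluating P_k at the adjacency matrix A gives the normalized distance-k matrix: P_k(A) = (∏_{m=1}^{k} √(a_m/b_m)) · A_k. -/
/-- A connected, locally finite simple graph `G` is *distance-regular* with intersection
numbers `a k`, `b k` (for `1 ≤ k` up to the diameter). -/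
def IsDistRegular {V : Type*} (G : SimpleGraph V) (a b : ℕ → ℕ) : Prop :=
  (∀ k : ℕ, 1 ≤ k → (∃ u v : V, G.dist u v = k) → 0 < a k ∧ 0 < b k) ∧
  (∀ k : ℕ, 1 ≤ k → ¬ (∃ u v : V, G.dist u v = k) → b k = 0) ∧
  (∀ (k : ℕ) (u v : V), G.dist u v = k →
    (1 ≤ k → {w : V | G.Adj v w ∧ G.dist u w = k - 1}.ncard = a k) ∧
    ((∃ x y : V, G.dist x y = k + 1) →
      {w : V | G.Adj v w ∧ G.dist u w = k + 1}.ncard = b (k + 1)))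

/-- The distance-`j` matrix of a graph `G`, with `(u,v)` entry `1` if `dist u v = j` and `0`
otherwise. -/
noncomputable def distMatrix {V : Type*} (G : SimpleGraph V) (j : ℤ) : Matrix V V ℝ :=
  Matrix.of fun u v => if (G.dist u v : ℤ) = j then 1 else 0

/-- The polynomials of the first kind: `P 0 = 1`, `P 1 = X / √(a 1 * b 1)`, and
`√(a (k+1) * b (k+1)) * P (k+1) = (X - α k) * P k - √(a k * b k) * P (k-1)`. -/
noncomputable def firstKind (a b α : ℕ → ℝ) : ℕ → Polynomial ℝ
  | 0 => 1
  | 1 => Polynomial.C (Real.sqrt (a 1 * b 1))⁻¹ * Polynomial.X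
  | k + 2 =>
      Polynomial.C (Real.sqrt (a (k + 2) * b (k + 2)))⁻¹ *
        ((Polynomial.X - Polynomial.C (α (k + 1))) * firstKind a b α (k + 1) -
          Polynomial.C (Real.sqrt (a (k + 1) * b (k + 1))) * firstKind a b α k)

/-! ### Auxiliary lemmas -/

lemma exists_dist_step {V : Type*} {G : SimpleGraph V} (hconn : G.Connected) {m : ℕ}
    (h : ∃ u v : V, G.dist u v = m + 1) : ∃ u v : V, G.dist u v = m := by
  obtain ⟨u, v, huv⟩ := h
  obtain ⟨p, hp⟩ := (hconn u v).exists_walk_length_eq_dist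
  rw [huv] at hp
  cases p with
  | nil => simp at hp
  | @cons _ w _ hadj q =>
    refine ⟨w, v, le_antisymm ?_ ?_⟩
    · have := SimpleGraph.dist_le q
      simp at hp; omega
    · have h1 : G.dist u w ≤ 1 := by
        have := SimpleGraph.dist_le (SimpleGraph.Walk.cons hadj SimpleGraph.Walk.nil)
        simpa using this
      have := hconn.dist_triangle (u := u) (v := w) (w := v)
      omega

lemma exists_dist_of_le {V : Type*} {G : SimpleGraph V} (hconn : G.Connected) {n : ℕ}
    (h : ∃ u v : V, G.dist u v = n) {m : ℕ} (hm : m ≤ n) : ∃ u v : V, G.dist u v = m := by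
  have key : ∀ j : ℕ, ∃ u v : V, G.dist u v = n - j := by
    intro j
    induction j with
    | zero => simpa using h
    | succ j ih =>
      rcases Nat.lt_or_ge j n with hj | hj
      · have : n - j = (n - (j + 1)) + 1 := by omega
        rw [this] at ih
        exact exists_dist_step hconn ih
      · have : n - (j + 1) = n - j := by omega
        rw [this]; exact ih
  have := key (n - m)
  rwa [Nat.sub_sub_self hm] at this

lemma mul_distMatrix_apply {V : Type*} [Fintype V] [DecidableEq V] (G : SimpleGraph V)
    [DecidableRel G.Adj] (j : ℕ) (u v : V) :
    (distMatrix G 1 * distMatrix G (j : ℤ)) u v =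
      ({w : V | G.Adj u w ∧ G.dist v w = j} : Set V).ncard := by
  classical
  rw [Matrix.mul_apply]
  have : ∀ w : V, distMatrix G 1 u w * distMatrix G (j : ℤ) w v =
      if G.Adj u w ∧ G.dist v w = j then (1 : ℝ) else 0 := by
    intro w
    simp only [distMatrix, Matrix.of_apply]
    by_cases h1 : G.Adj u w
    · have : G.dist u w = 1 := SimpleGraph.dist_eq_one_iff_adj.2 h1
      by_cases h2 : G.dist v w = j
      · simp [this, h1, h2, SimpleGraph.dist_comm (u := w) (v := v), Nat.cast_inj]
      · have : ¬ ((G.dist w v : ℤ) = (j : ℤ)) := by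
          rw [SimpleGraph.dist_comm]; exact_mod_cast h2
        simp [h1, h2, this]
    · have : ¬ (G.dist u w = 1) := fun h => h1 (SimpleGraph.dist_eq_one_iff_adj.1 h)
      have h3 : ¬ ((G.dist u w : ℤ) = (1 : ℤ)) := by exact_mod_cast this
      simp [h1, h3]
  rw [Finset.sum_congr rfl fun w _ => this w, Finset.sum_boole]
  rw [Set.ncard_eq_toFinset_card', Set.toFinset_setOf]

lemma degree_eq {V : Type*} (G : SimpleGraph V) (a b : ℕ → ℕ) (hdr : IsDistRegular G a b)
    (h1 : ∃ x y : V, G.dist x y = 1) (v : V) :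
    ({w : V | G.Adj v w} : Set V).ncard = b 1 := by
  have hd : G.dist v v = 0 := SimpleGraph.dist_self
  have := (hdr.2.2 0 v v hd).2 h1
  rw [← this]
  congr 1
  ext w
  simp only [Set.mem_setOf_eq, zero_add, SimpleGraph.dist_eq_one_iff_adj, and_self]

lemma a_one_eq {V : Type*} (G : SimpleGraph V) (hconn : G.Connected) (a b : ℕ → ℕ)
    (hdr : IsDistRegular G a b) (h1 : ∃ u v : V, G.dist u v = 1) : a 1 = 1 := by
  obtain ⟨u, v, huv⟩ := h1
  have h := (hdr.2.2 1 u v huv).1 le_rfl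
  rw [← h]
  have hset : {w : V | G.Adj v w ∧ G.dist u w = 1 - 1} = {u} := by
    ext w
    simp only [Set.mem_setOf_eq, Set.mem_singleton_iff, Nat.sub_self]
    constructor
    · rintro ⟨_, hw⟩
      exact ((hconn.dist_eq_zero_iff).1 hw).symm
    · rintro rfl
      exact ⟨(SimpleGraph.dist_eq_one_iff_adj.1 huv).symm, SimpleGraph.dist_self⟩
  rw [hset, Set.ncard_singleton]

lemma middle_count {V : Type*} [Fintype V] (G : SimpleGraph V) (hconn : G.Connected)
    (a b : ℕ → ℕ) (hdr : IsDistRegular G a b) (j : ℕ) (hj : 1 ≤ j) (u v : V)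
    (hd : G.dist v u = j) (h1 : ∃ x y : V, G.dist x y = 1)
    (hxj1 : ∃ x y : V, G.dist x y = j + 1) :
    b 1 = a j + ({w : V | G.Adj u w ∧ G.dist v w = j} : Set V).ncard + b (j + 1) := by
  have hN := degree_eq G a b hdr h1 u
  have hA := (hdr.2.2 j v u hd).1 hj
  have hB := (hdr.2.2 j v u hd).2 hxj1
  set A := {w : V | G.Adj u w ∧ G.dist v w = j - 1} with hAdef
  set B := {w : V | G.Adj u w ∧ G.dist v w = j} with hBdef
  set C := {w : V | G.Adj u w ∧ G.dist v w = j + 1} with hCdef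
  have hunion : ({w : V | G.Adj u w} : Set V) = A ∪ (B ∪ C) := by
    ext w
    simp only [hAdef, hBdef, hCdef, Set.mem_setOf_eq, Set.mem_union]
    constructor
    · intro hw
      have h1w : G.dist u w = 1 := SimpleGraph.dist_eq_one_iff_adj.2 hw
      have t1 : G.dist v w ≤ G.dist v u + G.dist u w := hconn.dist_triangle
      have t2 : G.dist v u ≤ G.dist v w + G.dist w u := hconn.dist_triangle
      have h2w : G.dist w u = 1 := by rw [SimpleGraph.dist_comm]; exact h1w
      have : G.dist v w = j - 1 ∨ G.dist v w = j ∨ G.dist v w = j + 1 := by omega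
      tauto
    · rintro (⟨h, _⟩ | ⟨h, _⟩ | ⟨h, _⟩) <;> exact h
  have d2 : Disjoint B C := by
    rw [Set.disjoint_left]
    rintro w ⟨_, hw1⟩ ⟨_, hw2⟩
    omega
  have d1 : Disjoint A (B ∪ C) := by
    rw [Set.disjoint_left]
    rintro w ⟨_, hw1⟩ (⟨_, hw2⟩ | ⟨_, hw2⟩) <;> omega
  rw [hunion, Set.ncard_union_eq d1 (Set.toFinite _) (Set.toFinite _),
    Set.ncard_union_eq d2 (Set.toFinite _) (Set.toFinite _), hA, hB] at hN
  omega

lemma key_recurrence {V : Type*} [Fintype V] [DecidableEq V] (G : SimpleGraph V)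
    [DecidableRel G.Adj] (hconn : G.Connected)
    (a b : ℕ → ℕ) (hdr : IsDistRegular G a b) (j : ℕ) (hj : 1 ≤ j)
    (h1 : ∃ x y : V, G.dist x y = 1) (hxj : ∃ x y : V, G.dist x y = j)
    (hxj1 : ∃ x y : V, G.dist x y = j + 1) :
    distMatrix G 1 * distMatrix G (j : ℤ) =
      (a (j + 1) : ℝ) • distMatrix G ((j : ℤ) + 1) +
        ((b 1 : ℝ) - ((a j : ℝ) + (b (j + 1) : ℝ))) • distMatrix G (j : ℤ) +
        (b j : ℝ) • distMatrix G ((j : ℤ) - 1) := by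
  ext u v
  rw [mul_distMatrix_apply]
  have hvd : G.dist v u = G.dist u v := SimpleGraph.dist_comm
  set l := G.dist u v with hl
  simp only [Matrix.add_apply, Matrix.smul_apply, distMatrix, Matrix.of_apply, smul_eq_mul,
    ← hl]
  by_cases hc1 : l = j + 1
  · have hA := (hdr.2.2 (j + 1) v u (by omega)).1 (by omega)
    have hj1 : j + 1 - 1 = j := by omega
    rw [hj1] at hA
    rw [if_pos (by omega : (l : ℤ) = (j : ℤ) + 1), if_neg (by omega : ¬ ((l : ℤ) = (j : ℤ))),
      if_neg (by omega : ¬ ((l : ℤ) = (j : ℤ) - 1)), hA]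
    ring
  · by_cases hc2 : l = j
    · have hmid := middle_count G hconn a b hdr j hj u v (by omega) h1 hxj1
      rw [if_neg (by omega : ¬ ((l : ℤ) = (j : ℤ) + 1)), if_pos (by omega : (l : ℤ) = (j : ℤ)),
        if_neg (by omega : ¬ ((l : ℤ) = (j : ℤ) - 1))]
      have hcast : (b 1 : ℝ) = (a j : ℝ) +
          (({w : V | G.Adj u w ∧ G.dist v w = j} : Set V).ncard : ℝ) + (b (j + 1) : ℝ) := by
        exact_mod_cast hmid
      linarith
    · by_cases hc3 : l + 1 = j
      · have hB := (hdr.2.2 l v u (by omega)).2 (by rw [(by omega : l + 1 = j)]; exact hxj)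
        rw [(by omega : l + 1 = j)] at hB
        rw [if_neg (by omega : ¬ ((l : ℤ) = (j : ℤ) + 1)),
          if_neg (by omega : ¬ ((l : ℤ) = (j : ℤ))),
          if_pos (by omega : (l : ℤ) = (j : ℤ) - 1), hB]
        ring
      · have hempty : ({w : V | G.Adj u w ∧ G.dist v w = j} : Set V) = ∅ := by
          rw [Set.eq_empty_iff_forall_notMem]
          rintro w ⟨hw, hdw⟩
          have h1w : G.dist u w = 1 := SimpleGraph.dist_eq_one_iff_adj.2 hw
          have t1 : G.dist v u ≤ G.dist v w + G.dist w u := hconn.dist_triangle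
          have t2 : G.dist v w ≤ G.dist v u + G.dist u w := hconn.dist_triangle
          have h2w : G.dist w u = 1 := by rw [SimpleGraph.dist_comm]; exact h1w
          omega
        rw [hempty, if_neg (by omega : ¬ ((l : ℤ) = (j : ℤ) + 1)),
          if_neg (by omega : ¬ ((l : ℤ) = (j : ℤ))),
          if_neg (by omega : ¬ ((l : ℤ) = (j : ℤ) - 1))]
        simp

lemma sqrt_mul_eq' (x y : ℝ) (hx : 0 < x) (hy : 0 < y) :
    Real.sqrt (x * y) = Real.sqrt (x / y) * y := by
  have h : x * y = (x / y) * y ^ 2 := by field_simp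
  rw [h, Real.sqrt_mul (by positivity), Real.sqrt_sq hy.le]

lemma sqrt_mul_inv_mul' (x y : ℝ) (hx : 0 < x) (hy : 0 < y) :
    (Real.sqrt (x * y))⁻¹ * x = Real.sqrt (x / y) := by
  have h : Real.sqrt (x * y) * Real.sqrt (x / y) = x := by
    rw [← Real.sqrt_mul (by positivity), show x * y * (x / y) = x ^ 2 by field_simp,
      Real.sqrt_sq hx.le]
  have hne : Real.sqrt (x * y) ≠ 0 := by positivity
  calc (Real.sqrt (x * y))⁻¹ * x
      = (Real.sqrt (x * y))⁻¹ * (Real.sqrt (x * y) * Real.sqrt (x / y)) := by rw [h]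
    _ = Real.sqrt (x / y) := inv_mul_cancel_left₀ hne _

/-- For a finite distance-regular graph of diameter `n` with intersection numbers
`{(a k, b k)}` and adjacency matrix `A = A_1`, evaluating the `k`-th polynomial of the first
kind (built from `a`, `b` and `α k = b 1 - (a k + b (k+1))`, with `b (n+1) = 0`) at `A` gives
the normalized distance-`k` matrix:
`P k (A) = (∏_{m=1}^{k} √(a m / b m)) • A_k`, for every `0 ≤ k ≤ n`. -/
theorem distRegular_firstKind_eval_adjMatrix {V : Type*} [Fintype V] [DecidableEq V]
    (G : SimpleGraph V) (hconn : G.Connected) (a b : ℕ → ℕ) (hdr : IsDistRegular G a b)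
    (n : ℕ) (hdiam_le : ∀ u v : V, G.dist u v ≤ n) (hdiam : ∃ u v : V, G.dist u v = n)
    (hbn : b (n + 1) = 0) :
    ∀ k : ℕ, k ≤ n →
      Polynomial.aeval (distMatrix G 1)
          (firstKind (fun m => (a m : ℝ)) (fun m => (b m : ℝ))
            (fun m => (b 1 : ℝ) - ((a m : ℝ) + (b (m + 1) : ℝ))) k) =
        (∏ m ∈ Finset.Icc 1 k, Real.sqrt ((a m : ℝ) / (b m : ℝ))) • distMatrix G (k : ℤ) := by
  haveI : DecidableRel G.Adj := Classical.decRel _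
  intro k
  induction k using Nat.twoStepInduction with
  | zero =>
    intro _
    rw [show firstKind (fun m => (a m : ℝ)) (fun m => (b m : ℝ))
        (fun m => (b 1 : ℝ) - ((a m : ℝ) + (b (m + 1) : ℝ))) 0 = 1 from rfl, map_one,
      Finset.Icc_eq_empty (by omega), Finset.prod_empty, one_smul]
    ext u v
    simp only [distMatrix, Matrix.of_apply, Nat.cast_zero, Nat.cast_eq_zero, Matrix.one_apply,
      hconn.dist_eq_zero_iff]
  | one =>
    intro h1n
    have h1 : ∃ x y : V, G.dist x y = 1 := exists_dist_of_le hconn hdiam h1n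
    have ha1 : a 1 = 1 := a_one_eq G hconn a b hdr h1
    have hb1 : 0 < b 1 := (hdr.1 1 le_rfl h1).2
    have ha1R : (a 1 : ℝ) = 1 := by exact_mod_cast ha1
    have hb1R : (0 : ℝ) < (b 1 : ℝ) := by exact_mod_cast hb1
    rw [show firstKind (fun m => (a m : ℝ)) (fun m => (b m : ℝ))
        (fun m => (b 1 : ℝ) - ((a m : ℝ) + (b (m + 1) : ℝ))) 1 =
        Polynomial.C (Real.sqrt ((a 1 : ℝ) * (b 1 : ℝ)))⁻¹ * Polynomial.X from rfl,
      map_mul, Polynomial.aeval_C, Polynomial.aeval_X, ← Algebra.smul_def,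
      Finset.Icc_self, Finset.prod_singleton, Nat.cast_one]
    congr 1
    rw [← sqrt_mul_inv_mul' (a 1 : ℝ) (b 1 : ℝ) (by rw [ha1R]; norm_num) hb1R, ha1R, mul_one]
  | more k ih1 ih2 =>
    intro hk2
    have hkn : k ≤ n := by omega
    have hjn : k + 1 ≤ n := by omega
    have h1 : ∃ x y : V, G.dist x y = 1 := exists_dist_of_le hconn hdiam (by omega)
    have hxj : ∃ x y : V, G.dist x y = k + 1 := exists_dist_of_le hconn hdiam hjn
    have hxj1 : ∃ x y : V, G.dist x y = k + 2 := exists_dist_of_le hconn hdiam hk2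
    have haj : (0 : ℝ) < (a (k + 1) : ℝ) := by exact_mod_cast (hdr.1 _ (by omega) hxj).1
    have hbj : (0 : ℝ) < (b (k + 1) : ℝ) := by exact_mod_cast (hdr.1 _ (by omega) hxj).2
    have haj1 : (0 : ℝ) < (a (k + 2) : ℝ) := by exact_mod_cast (hdr.1 _ (by omega) hxj1).1
    have hbj1 : (0 : ℝ) < (b (k + 2) : ℝ) := by exact_mod_cast (hdr.1 _ (by omega) hxj1).2
    have ihj := ih2 hjn
    have ihk := ih1 hkn
    have hkey : distMatrix G 1 * distMatrix G ((k + 1 : ℕ) : ℤ) =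
        (a (k + 2) : ℝ) • distMatrix G ((k + 2 : ℕ) : ℤ) +
          ((b 1 : ℝ) - ((a (k + 1) : ℝ) + (b (k + 2) : ℝ))) • distMatrix G ((k + 1 : ℕ) : ℤ) +
          (b (k + 1) : ℝ) • distMatrix G ((k : ℕ) : ℤ) := by
      rw [show ((k + 2 : ℕ) : ℤ) = ((k + 1 : ℕ) : ℤ) + 1 by push_cast; ring,
        show ((k : ℕ) : ℤ) = ((k + 1 : ℕ) : ℤ) - 1 by push_cast; ring]
      exact key_recurrence G hconn a b hdr (k + 1) (by omega) h1 hxj hxj1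
    simp only [firstKind, map_mul, map_sub, Polynomial.aeval_C, Polynomial.aeval_X,
      Algebra.algebraMap_eq_smul_one, ihj, ihk, show k + 1 + 1 = k + 2 from rfl]
    simp only [sub_mul, smul_mul_assoc, mul_smul_comm, one_mul, smul_smul]
    rw [hkey]
    have hcprod : (∏ m ∈ Finset.Icc 1 (k + 2), Real.sqrt ((a m : ℝ) / (b m : ℝ))) =
        (∏ m ∈ Finset.Icc 1 (k + 1), Real.sqrt ((a m : ℝ) / (b m : ℝ))) *
          Real.sqrt ((a (k + 2) : ℝ) / (b (k + 2) : ℝ)) := by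
      rw [← Finset.prod_Icc_succ_top (by omega : 1 ≤ k + 2)]
    have hcprod' : (∏ m ∈ Finset.Icc 1 (k + 1), Real.sqrt ((a m : ℝ) / (b m : ℝ))) =
        (∏ m ∈ Finset.Icc 1 k, Real.sqrt ((a m : ℝ) / (b m : ℝ))) *
          Real.sqrt ((a (k + 1) : ℝ) / (b (k + 1) : ℝ)) := by
      rw [← Finset.prod_Icc_succ_top (by omega : 1 ≤ k + 1)]
    have hL1 := sqrt_mul_eq' (a (k + 1) : ℝ) (b (k + 1) : ℝ) haj hbj
    have hL2 := sqrt_mul_inv_mul' (a (k + 2) : ℝ) (b (k + 2) : ℝ) haj1 hbj1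
    match_scalars
    · rw [hcprod, hcprod']
      linear_combination ((∏ m ∈ Finset.Icc 1 k, Real.sqrt ((a m : ℝ) / (b m : ℝ))) *
        Real.sqrt ((a (k + 1) : ℝ) / (b (k + 1) : ℝ))) * hL2
    · ring
    · rw [hcprod']
      linear_combination (-(Real.sqrt ((a (k + 2) : ℝ) * (b (k + 2) : ℝ)))⁻¹ *
        (∏ m ∈ Finset.Icc 1 k, Real.sqrt ((a m : ℝ) / (b m : ℝ)))) * hL1
end

section
/- Let P_{n+1}^{(τ)} (τ ∈ ℝ) be the family of perturbed first-kind polynomials associated with positive reals a_1,…,a_n, b_1,…,b_n and reals α_1,…,α_{n−1}. Fix τ₀ ∈ ℝ and let α < β be two roots of P_{n+1}^{(τ₀)} such that P_{n+1}^{(τ₀)} has no root in the open interval (α, β). Then for every τ ≠ τ₀, the polynomial P_{n+1}^{(τ)} has exactly one root in (α, β); that is, the spectra of the Jacobi matrices J_τ are pairwise interlaced. -/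
/-- The perturbed polynomial `P_{n+1}^{(τ)}(x) = (x - τ) P n (x) - √(a n * b n) P (n-1) (x)`. -/
noncomputable def firstKindPerturbed (a b α : ℕ → ℝ) (n : ℕ) (τ : ℝ) : Polynomial ℝ :=
  (Polynomial.X - Polynomial.C τ) * firstKind a b α n -
    Polynomial.C (Real.sqrt (a n * b n)) * firstKind a b α (n - 1)

/-- The `(n+1) × (n+1)` real symmetric tridiagonal Jacobi matrix with diagonal
`(0, α 1, …, α (n-1), τ)` and off-diagonal entries `√(a 1 * b 1), …, √(a n * b n)`. -/
noncomputable def jacobiMat (n : ℕ) (a b α : ℕ → ℝ) (τ : ℝ) :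
    Matrix (Fin (n + 1)) (Fin (n + 1)) ℝ :=
  Matrix.of fun i j =>
    if (i : ℕ) = (j : ℕ) then
      (if (i : ℕ) = 0 then 0 else if (i : ℕ) = n then τ else α (i : ℕ))
    else if (i : ℕ) + 1 = (j : ℕ) then Real.sqrt (a (j : ℕ) * b (j : ℕ))
    else if (j : ℕ) + 1 = (i : ℕ) then Real.sqrt (a (i : ℕ) * b (i : ℕ))
    else 0

open Polynomial Set Filter

open Polynomial in
lemma firstKind_rec (a b α : ℕ → ℝ) (k : ℕ)
    (hc : Real.sqrt (a (k+2) * b (k+2)) ≠ 0) :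
    C (Real.sqrt (a (k+2) * b (k+2))) * firstKind a b α (k+2)
      = (X - C (α (k+1))) * firstKind a b α (k+1)
        - C (Real.sqrt (a (k+1) * b (k+1))) * firstKind a b α k := by
  show C (Real.sqrt (a (k+2) * b (k+2))) * (C (Real.sqrt (a (k + 2) * b (k + 2)))⁻¹ *
        ((X - C (α (k + 1))) * firstKind a b α (k + 1) -
          C (Real.sqrt (a (k + 1) * b (k + 1))) * firstKind a b α k)) = _
  rw [← mul_assoc, ← C_mul, mul_inv_cancel₀ hc, C_1, one_mul]

open Polynomial in
lemma firstKind_wronskian (a b α : ℕ → ℝ) (n : ℕ)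
    (hc : ∀ k, 1 ≤ k → k ≤ n → Real.sqrt (a k * b k) ≠ 0) :
    ∀ k, k + 1 ≤ n →
      C (Real.sqrt (a (k+1) * b (k+1))) *
        (derivative (firstKind a b α (k+1)) * firstKind a b α k
          - firstKind a b α (k+1) * derivative (firstKind a b α k))
        = ∑ j ∈ Finset.range (k+1), (firstKind a b α j)^2 := by
  intro k
  induction k with
  | zero =>
    intro h
    have h1 := hc 1 le_rfl h
    simp only [firstKind, Finset.sum_range_one, derivative_one, mul_zero, sub_zero,
      derivative_C_mul, derivative_X, mul_one, one_pow]
    rw [← C_mul, mul_inv_cancel₀ h1, C_1]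
    simp [firstKind]
  | succ k ih =>
    intro h
    have h2 : k + 2 ≤ n := h
    have hrec := firstKind_rec a b α k (hc (k+2) (by omega) h2)
    have hrec' := congrArg derivative hrec
    rw [derivative_C_mul] at hrec'
    have key : C (Real.sqrt (a (k+2) * b (k+2))) *
        (derivative (firstKind a b α (k+2)) * firstKind a b α (k+1)
          - firstKind a b α (k+2) * derivative (firstKind a b α (k+1)))
        = derivative ((X - C (α (k+1))) * firstKind a b α (k+1)
            - C (Real.sqrt (a (k+1) * b (k+1))) * firstKind a b α k) * firstKind a b α (k+1)
          - ((X - C (α (k+1))) * firstKind a b α (k+1)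
            - C (Real.sqrt (a (k+1) * b (k+1))) * firstKind a b α k)
              * derivative (firstKind a b α (k+1)) := by
      linear_combination firstKind a b α (k+1) * hrec' - derivative (firstKind a b α (k+1)) * hrec
    rw [key, Finset.sum_range_succ, ← ih (by omega)]
    simp only [derivative_sub, derivative_mul, derivative_X, derivative_C, one_mul, zero_mul,
      zero_add, sub_zero]
    ring

open Polynomial in
lemma perturbed_wronskian (a b α : ℕ → ℝ) (m : ℕ) (τ : ℝ)
    (hc : ∀ k, 1 ≤ k → k ≤ m + 1 → Real.sqrt (a k * b k) ≠ 0) :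
    derivative (firstKindPerturbed a b α (m+1) τ) * firstKind a b α (m+1)
      - firstKindPerturbed a b α (m+1) τ * derivative (firstKind a b α (m+1))
      = ∑ j ∈ Finset.range (m+2), (firstKind a b α j)^2 := by
  have ih := firstKind_wronskian a b α (m+1) hc m le_rfl
  unfold firstKindPerturbed
  simp only [Nat.add_sub_cancel]
  rw [Finset.sum_range_succ, ← ih]
  simp only [derivative_sub, derivative_mul, derivative_X, derivative_C, one_mul, zero_mul,
    zero_add, sub_zero]
  ring

open Polynomial in
lemma perturbed_sub (a b α : ℕ → ℝ) (n : ℕ) (τ τ₀ : ℝ) :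
    firstKindPerturbed a b α n τ
      = firstKindPerturbed a b α n τ₀ + C (τ₀ - τ) * firstKind a b α n := by
  unfold firstKindPerturbed
  rw [C_sub]
  ring

open Polynomial in
lemma cross_wronskian (a b α : ℕ → ℝ) (m : ℕ) (τ τ₀ : ℝ)
    (hc : ∀ k, 1 ≤ k → k ≤ m + 1 → Real.sqrt (a k * b k) ≠ 0) :
    derivative (firstKindPerturbed a b α (m+1) τ) * firstKindPerturbed a b α (m+1) τ₀
      - firstKindPerturbed a b α (m+1) τ * derivative (firstKindPerturbed a b α (m+1) τ₀)
      = C (τ - τ₀) * ∑ j ∈ Finset.range (m+2), (firstKind a b α j)^2 := by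
  have h := perturbed_wronskian a b α m τ₀ hc
  rw [perturbed_sub a b α (m+1) τ τ₀]
  rw [show (τ - τ₀) = -(τ₀ - τ) by ring, C_neg]
  simp only [derivative_add, derivative_mul, derivative_C, zero_mul, zero_add]
  linear_combination (-(C (τ₀ - τ))) * h

open Polynomial Set Filter

lemma poly_ivt (p : Polynomial ℝ) {u v : ℝ} (huv : u ≤ v)
    (h : p.eval u * p.eval v < 0) : ∃ x ∈ Set.Icc u v, p.eval x = 0 := by
  have hcont : ContinuousOn (fun x => p.eval x) (Set.Icc u v) :=
    (Polynomial.continuous p).continuousOn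
  rcases lt_or_ge (p.eval u) 0 with h1 | h1
  · have h2 : 0 < p.eval v := by nlinarith
    obtain ⟨x, hx, hx0⟩ := intermediate_value_Icc huv hcont ⟨le_of_lt h1, le_of_lt h2⟩
    exact ⟨x, hx, hx0⟩
  · have h2 : p.eval v < 0 := by nlinarith
    obtain ⟨x, hx, hx0⟩ := intermediate_value_Icc' huv hcont ⟨le_of_lt h2, h1⟩
    exact ⟨x, hx, hx0⟩

lemma sum_sq_pos (a b α : ℕ → ℝ) (Q : ℕ → Polynomial ℝ) (hQ0 : Q 0 = 1) (N : ℕ) (x : ℝ) :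
    0 < Polynomial.eval x (∑ j ∈ Finset.range (N+1), (Q j)^2) := by
  rw [Polynomial.eval_finset_sum]
  refine Finset.sum_pos' (fun j _ => by simp only [Polynomial.eval_pow]; positivity)
    ⟨0, Finset.mem_range.2 (Nat.succ_pos N), by simp [hQ0]⟩

/-- Near a simple zero of a polynomial, off the zero, the slope has the sign of the
derivative, eventually. -/
lemma eventually_slope_sign (p : Polynomial ℝ) {t : ℝ} (h0 : p.eval t = 0)
    (hd : p.derivative.eval t ≠ 0) :
    ∀ᶠ u in nhdsWithin t {t}ᶜ, 0 < (p.eval u / (u - t)) * p.derivative.eval t := by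
  have hder : HasDerivAt (fun x => p.eval x) (p.derivative.eval t) t := p.hasDerivAt t
  have hslope := hasDerivAt_iff_tendsto_slope.mp hder
  have hopen : IsOpen {s : ℝ | 0 < s * p.derivative.eval t} :=
    isOpen_lt continuous_const (continuous_id.mul continuous_const)
  have hmem : {s : ℝ | 0 < s * p.derivative.eval t} ∈ nhds (p.derivative.eval t) :=
    hopen.mem_nhds (mul_self_pos.2 hd)
  filter_upwards [hslope hmem] with u hu
  have : slope (fun x => p.eval x) t u = p.eval u / (u - t) := by
    rw [slope_def_field]; simp [h0]
  simp only [Set.mem_preimage, Set.mem_setOf_eq, this] at hu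
  exact hu


/-- Interlacing: fix `τ₀` and let `α' < β'` be two roots of `P_{n+1}^{(τ₀)}` with no root of
`P_{n+1}^{(τ₀)}` in the open interval `(α', β')`.  Then for every `τ ≠ τ₀`, the polynomial
`P_{n+1}^{(τ)}` has exactly one root in `(α', β')`; that is, the spectra of the Jacobi
matrices `J_τ` are pairwise interlaced. -/
theorem firstKindPerturbed_interlacing (n : ℕ) (hn : 1 ≤ n) (a b : ℕ → ℝ)
    (hpos : ∀ k : ℕ, 1 ≤ k → k ≤ n → 0 < a k ∧ 0 < b k) (α : ℕ → ℝ) (τ₀ : ℝ)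
    (x₁ x₂ : ℝ) (hlt : x₁ < x₂)
    (h₁ : Polynomial.eval x₁ (firstKindPerturbed a b α n τ₀) = 0)
    (h₂ : Polynomial.eval x₂ (firstKindPerturbed a b α n τ₀) = 0)
    (hgap : ∀ x ∈ Set.Ioo x₁ x₂, Polynomial.eval x (firstKindPerturbed a b α n τ₀) ≠ 0) :
    ∀ τ : ℝ, τ ≠ τ₀ →
      ∃! x : ℝ, x ∈ Set.Ioo x₁ x₂ ∧ Polynomial.eval x (firstKindPerturbed a b α n τ) = 0 := by
  intro τ hτ
  obtain ⟨m, rfl⟩ : ∃ m, n = m + 1 := ⟨n - 1, (Nat.succ_pred_eq_of_pos hn).symm⟩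
  have hc : ∀ k, 1 ≤ k → k ≤ m + 1 → Real.sqrt (a k * b k) ≠ 0 := fun k hk1 hk2 =>
    ne_of_gt (Real.sqrt_pos.2 (mul_pos (hpos k hk1 hk2).1 (hpos k hk1 hk2).2))
  set P₀ : Polynomial ℝ := firstKindPerturbed a b α (m+1) τ₀ with hP₀def
  set Pτ : Polynomial ℝ := firstKindPerturbed a b α (m+1) τ with hPτdef
  set S : Polynomial ℝ := ∑ j ∈ Finset.range (m+2), (firstKind a b α j)^2 with hSdef
  have hSpos : ∀ x, 0 < Polynomial.eval x S :=
    sum_sq_pos a b α (firstKind a b α) rfl (m+1)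
  have hw := perturbed_wronskian a b α m τ₀ hc
  have hcross := cross_wronskian a b α m τ τ₀ hc
  set q₁ : ℝ := Polynomial.eval x₁ (firstKind a b α (m+1)) with hq₁def
  set q₂ : ℝ := Polynomial.eval x₂ (firstKind a b α (m+1)) with hq₂def
  set d₁ : ℝ := Polynomial.eval x₁ (Polynomial.derivative P₀) with hd₁def
  set d₂ : ℝ := Polynomial.eval x₂ (Polynomial.derivative P₀) with hd₂def
  have hw1 : d₁ * q₁ = Polynomial.eval x₁ S := by
    have := congrArg (Polynomial.eval x₁) hw
    have h₁' : Polynomial.eval x₁ (firstKindPerturbed a b α (m+1) τ₀) = 0 := h₁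
    simpa [h₁', d₁, q₁, P₀, S] using this
  have hw2 : d₂ * q₂ = Polynomial.eval x₂ S := by
    have := congrArg (Polynomial.eval x₂) hw
    have h₂' : Polynomial.eval x₂ (firstKindPerturbed a b α (m+1) τ₀) = 0 := h₂
    simpa [h₂', d₂, q₂, P₀, S] using this
  have hd₁q₁ : 0 < d₁ * q₁ := hw1 ▸ hSpos x₁
  have hd₂q₂ : 0 < d₂ * q₂ := hw2 ▸ hSpos x₂
  have hd₁ne : d₁ ≠ 0 := fun h => by simp [h] at hd₁q₁
  have hd₂ne : d₂ ≠ 0 := fun h => by simp [h] at hd₂q₂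
  -- sign of P₀ is constant on the open interval
  have hsign : ∀ u ∈ Set.Ioo x₁ x₂, ∀ v ∈ Set.Ioo x₁ x₂,
      0 < Polynomial.eval u P₀ * Polynomial.eval v P₀ := by
    intro u hu v hv
    by_contra hle
    push_neg at hle
    have hne : Polynomial.eval u P₀ * Polynomial.eval v P₀ ≠ 0 :=
      mul_ne_zero (hgap u hu) (hgap v hv)
    have hltneg : Polynomial.eval u P₀ * Polynomial.eval v P₀ < 0 := lt_of_le_of_ne hle hne
    rcases le_total u v with huv | huv
    · obtain ⟨x, hx, hx0⟩ := poly_ivt P₀ huv hltneg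
      exact hgap x ⟨lt_of_lt_of_le hu.1 hx.1, lt_of_le_of_lt hx.2 hv.2⟩ hx0
    · obtain ⟨x, hx, hx0⟩ := poly_ivt P₀ huv (by linarith [mul_comm (Polynomial.eval u P₀) (Polynomial.eval v P₀)])
      exact hgap x ⟨lt_of_lt_of_le hv.1 hx.1, lt_of_le_of_lt hx.2 hu.2⟩ hx0
  -- point near x₁ with sign of d₁
  have hmono₁ : nhdsWithin x₁ (Set.Ioi x₁) ≤ nhdsWithin x₁ {x₁}ᶜ :=
    nhdsWithin_mono _ (fun y hy => Set.mem_compl_singleton_iff.mpr (ne_of_gt hy))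
  have hIoo₁ : Set.Ioo x₁ x₂ ∈ nhdsWithin x₁ (Set.Ioi x₁) :=
    Ioo_mem_nhdsGT_of_mem ⟨le_refl x₁, hlt⟩
  have hEv₁ : ∀ᶠ y in nhdsWithin x₁ (Set.Ioi x₁), y ∈ Set.Ioo x₁ x₂ := hIoo₁
  obtain ⟨u, hu_slope, hu_mem⟩ :=
    (((eventually_slope_sign P₀ h₁ hd₁ne).filter_mono hmono₁).and hEv₁).exists
  have hupos : 0 < Polynomial.eval u P₀ * d₁ := by
    have h1pos : 0 < u - x₁ := sub_pos.2 hu_mem.1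
    have heq : Polynomial.eval u P₀ * d₁
        = (Polynomial.eval u P₀ / (u - x₁)) * d₁ * (u - x₁) := by
      field_simp
    rw [heq]
    exact mul_pos hu_slope h1pos
  -- point near x₂ with sign of -d₂
  have hmono₂ : nhdsWithin x₂ (Set.Iio x₂) ≤ nhdsWithin x₂ {x₂}ᶜ :=
    nhdsWithin_mono _ (fun y hy => Set.mem_compl_singleton_iff.mpr (ne_of_lt hy))
  have hIoo₂ : Set.Ioo x₁ x₂ ∈ nhdsWithin x₂ (Set.Iio x₂) :=
    Ioo_mem_nhdsLT_of_mem ⟨hlt, le_refl x₂⟩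
  have hEv₂ : ∀ᶠ y in nhdsWithin x₂ (Set.Iio x₂), y ∈ Set.Ioo x₁ x₂ := hIoo₂
  obtain ⟨v, hv_slope, hv_mem⟩ :=
    (((eventually_slope_sign P₀ h₂ hd₂ne).filter_mono hmono₂).and hEv₂).exists
  have hvneg : Polynomial.eval v P₀ * d₂ < 0 := by
    have h2neg : v - x₂ < 0 := sub_neg.2 hv_mem.2
    have heq : Polynomial.eval v P₀ * d₂
        = (Polynomial.eval v P₀ / (v - x₂)) * d₂ * (v - x₂) := by
      field_simp
      exact (mul_div_cancel_right₀ _ (ne_of_lt h2neg)).symm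
    rw [heq]
    exact mul_neg_of_pos_of_neg hv_slope h2neg
  have hPuv : 0 < Polynomial.eval u P₀ * Polynomial.eval v P₀ := hsign u hu_mem v hv_mem
  have hdd : d₁ * d₂ < 0 := by
    by_contra hge
    push_neg at hge
    nlinarith [mul_neg_of_pos_of_neg hupos hvneg, mul_nonneg hPuv.le hge]
  have hq1q2 : q₁ * q₂ < 0 := by
    by_contra hge
    push_neg at hge
    nlinarith [mul_pos hd₁q₁ hd₂q₂, mul_nonpos_of_nonpos_of_nonneg hdd.le hge]
  -- existence via IVT
  have hsub := perturbed_sub a b α (m+1) τ τ₀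
  have hτ1 : Polynomial.eval x₁ Pτ = (τ₀ - τ) * q₁ := by
    have := congrArg (Polynomial.eval x₁) hsub
    have h₁' : Polynomial.eval x₁ (firstKindPerturbed a b α (m+1) τ₀) = 0 := h₁
    simpa [h₁', q₁, Pτ, P₀] using this
  have hτ2 : Polynomial.eval x₂ Pτ = (τ₀ - τ) * q₂ := by
    have := congrArg (Polynomial.eval x₂) hsub
    have h₂' : Polynomial.eval x₂ (firstKindPerturbed a b α (m+1) τ₀) = 0 := h₂
    simpa [h₂', q₂, Pτ, P₀] using this
  have hττ : τ₀ - τ ≠ 0 := sub_ne_zero.2 (Ne.symm hτ)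
  have hprod : Polynomial.eval x₁ Pτ * Polynomial.eval x₂ Pτ < 0 := by
    rw [hτ1, hτ2]
    nlinarith [mul_self_pos.2 hττ, hq1q2,
      mul_neg_of_pos_of_neg (mul_self_pos.2 hττ) hq1q2]
  obtain ⟨y, hyIcc, hy0⟩ := poly_ivt Pτ hlt.le hprod
  have hy1 : y ≠ x₁ := by rintro rfl; rw [hy0] at hprod; simp at hprod
  have hy2 : y ≠ x₂ := by rintro rfl; rw [hy0] at hprod; simp at hprod
  have hyIoo : y ∈ Set.Ioo x₁ x₂ := ⟨hyIcc.1.lt_of_ne (Ne.symm hy1), hyIcc.2.lt_of_ne hy2⟩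
  -- uniqueness via Rolle
  have key : ∀ w₁ w₂ : ℝ, w₁ ∈ Set.Ioo x₁ x₂ → w₂ ∈ Set.Ioo x₁ x₂ → w₁ < w₂ →
      Polynomial.eval w₁ Pτ = 0 → Polynomial.eval w₂ Pτ = 0 → False := by
    intro w₁ w₂ hw₁ hw₂ hww hr₁ hr₂
    have hsubIcc : Set.Icc w₁ w₂ ⊆ Set.Ioo x₁ x₂ := fun x hx =>
      ⟨lt_of_lt_of_le hw₁.1 hx.1, lt_of_le_of_lt hx.2 hw₂.2⟩
    have hne0 : ∀ x ∈ Set.Icc w₁ w₂, Polynomial.eval x P₀ ≠ 0 := fun x hx =>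
      hgap x (hsubIcc hx)
    have hderiv : ∀ x ∈ Set.Ioo w₁ w₂,
        HasDerivAt (fun y => Polynomial.eval y Pτ / Polynomial.eval y P₀)
          ((Polynomial.eval x (Polynomial.derivative Pτ) * Polynomial.eval x P₀
            - Polynomial.eval x Pτ * Polynomial.eval x (Polynomial.derivative P₀))
              / (Polynomial.eval x P₀)^2) x := fun x hx =>
      (Pτ.hasDerivAt x).div (P₀.hasDerivAt x) (hne0 x (Set.Ioo_subset_Icc_self hx))
    have hcont : ContinuousOn (fun y => Polynomial.eval y Pτ / Polynomial.eval y P₀)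
        (Set.Icc w₁ w₂) :=
      (Pτ.continuous.continuousOn).div (P₀.continuous.continuousOn) hne0
    have hval : (fun y => Polynomial.eval y Pτ / Polynomial.eval y P₀) w₁
        = (fun y => Polynomial.eval y Pτ / Polynomial.eval y P₀) w₂ := by
      simp [hr₁, hr₂]
    obtain ⟨c, hcIoo, hc0⟩ := exists_hasDerivAt_eq_zero hww hcont hval hderiv
    rw [_root_.div_eq_zero_iff] at hc0
    rcases hc0 with hc0 | hc0
    · have hnum := congrArg (Polynomial.eval c) hcross
      simp only [Polynomial.eval_sub, Polynomial.eval_mul, Polynomial.eval_C] at hnum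
      rw [hc0] at hnum
      exact absurd hnum.symm (mul_ne_zero (sub_ne_zero.2 hτ) (ne_of_gt (hSpos c)))
    · exact hne0 c (Set.Ioo_subset_Icc_self hcIoo) (pow_eq_zero_iff two_ne_zero |>.mp hc0)
  refine ⟨y, ⟨hyIoo, hy0⟩, ?_⟩
  rintro z ⟨hzIoo, hz0⟩
  by_contra hne
  rcases lt_or_gt_of_ne hne with h | h
  · exact key z y hzIoo hyIoo h hz0 hy0
  · exact key y z hyIoo hzIoo h hy0 hz0
end
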